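/- Let B be a unital C*-algebra, ψ₁, …, ψ_d a Cuntz family of order d in B with canonical endomorphism σ, and r, s ≥ 0. For n ≥ 0, let c_n denote the permutation of {1, …, n+1} defined by c_n(1) := n + 1 and c_n(i) := i − 1 for 2 ≤ i ≤ n + 1. Suppose t ∈ B satisfies σ(t) = θ(c_s) t θ(c_r)*. Then for all multi-indices L ∈ {1, …, d}^s and M ∈ {1, …, d}^r, the element t_{LM} := ψ_L* t ψ_M is a fixed point of σ: σ(t_{LM}) = t_{LM}. -/

import Mathlib

/-- A Cuntz family of order `d` in a unital C*-algebra `B`:  a family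
`ψ₁, …, ψ_d` with `ψᵢ* ψⱼ = δᵢⱼ 1` and `Σᵢ ψᵢ ψᵢ* = 1`. -/
def IsCuntzFamily {B : Type*} [CStarAlgebra B] {d : ℕ} (ψ : Fin d → B) : Prop :=
  (∀ i j, star (ψ i) * ψ j = if i = j then (1 : B) else 0) ∧
    ∑ i, ψ i * star (ψ i) = 1

/-- The canonical endomorphism `σ(b) := Σᵢ ψᵢ b ψᵢ*` of a Cuntz family. -/
def cuntzEndo {B : Type*} [CStarAlgebra B] {d : ℕ} (ψ : Fin d → B) (b : B) : B :=
  ∑ i, ψ i * b * star (ψ i)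

/-- The word `ψ_J := ψ_{j₁} ⋯ ψ_{j_r}` associated with a multi-index
`J = (j₁, …, j_r) ∈ {1, …, d}^r`. -/
def cuntzWord {B : Type*} [CStarAlgebra B] {d : ℕ} (ψ : Fin d → B) {r : ℕ}
    (J : Fin r → Fin d) : B :=
  (List.ofFn fun k => ψ (J k)).prod

/-- The permutation operator
`θ(p) := Σ_{l₁,…,l_r} ψ_{l_{p(1)}} ⋯ ψ_{l_{p(r)}} ψ_{l_r}* ⋯ ψ_{l₁}*`. -/
def cuntzPermOp {B : Type*} [CStarAlgebra B] {d : ℕ} (ψ : Fin d → B) {r : ℕ}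
    (p : Equiv.Perm (Fin r)) : B :=
  ∑ l : Fin r → Fin d, cuntzWord ψ (l ∘ p) * star (cuntzWord ψ l)

section Aux
variable {B : Type*} [CStarAlgebra B] {d : ℕ} (ψ : Fin d → B)

lemma cuntzWord_zero (J : Fin 0 → Fin d) : cuntzWord ψ J = 1 := by
  simp [cuntzWord]

lemma cuntzWord_cons {n : ℕ} (a : Fin d) (J : Fin n → Fin d) :
    cuntzWord ψ (Fin.cons a J) = ψ a * cuntzWord ψ J := by
  simp [cuntzWord, List.ofFn_succ]

lemma cuntzWord_snoc {n : ℕ} (J : Fin n → Fin d) (a : Fin d) :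
    cuntzWord ψ (Fin.snoc J a) = cuntzWord ψ J * ψ a := by
  rw [cuntzWord, List.ofFn_succ']
  simp [cuntzWord]

variable (hψ : IsCuntzFamily ψ)
include hψ

lemma cuntzWord_orth {n : ℕ} (l J : Fin n → Fin d) :
    star (cuntzWord ψ l) * cuntzWord ψ J = if l = J then 1 else 0 := by
  induction n with
  | zero => simp [cuntzWord_zero, Subsingleton.elim l J]
  | succ n ih =>
    rw [← Fin.cons_self_tail l, ← Fin.cons_self_tail J, cuntzWord_cons, cuntzWord_cons,
      star_mul]
    have key : star (cuntzWord ψ (Fin.tail l)) * star (ψ (l 0)) *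
        (ψ (J 0) * cuntzWord ψ (Fin.tail J)) =
        star (cuntzWord ψ (Fin.tail l)) * ((star (ψ (l 0)) * ψ (J 0)) *
          cuntzWord ψ (Fin.tail J)) := by
      simp only [mul_assoc]
    rw [key, hψ.1]
    by_cases h0 : l 0 = J 0
    · rw [if_pos h0, one_mul, ih]
      by_cases ht : Fin.tail l = Fin.tail J
      · rw [if_pos ht, if_pos (by rw [h0, ht])]
      · rw [if_neg ht, if_neg (fun h => ht (Fin.cons_inj.mp h).2)]
    · rw [if_neg h0, zero_mul, mul_zero,
        if_neg (fun h => h0 (Fin.cons_inj.mp h).1)]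

lemma cuntzWord_complete (n : ℕ) :
    ∑ l : Fin n → Fin d, cuntzWord ψ l * star (cuntzWord ψ l) = 1 := by
  induction n with
  | zero => simp [cuntzWord_zero]
  | succ n ih =>
    rw [← Fintype.sum_equiv (Fin.consEquiv fun _ : Fin (n+1) => Fin d)
      (fun x => cuntzWord ψ (Fin.cons x.1 x.2) * star (cuntzWord ψ (Fin.cons x.1 x.2)))
      (fun l => cuntzWord ψ l * star (cuntzWord ψ l))
      (fun x => by simp [Fin.consEquiv])]
    rw [Fintype.sum_prod_type]
    have : ∀ a : Fin d, ∑ J : Fin n → Fin d,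
        cuntzWord ψ (Fin.cons a J) * star (cuntzWord ψ (Fin.cons a J)) =
        ψ a * star (ψ a) := by
      intro a
      have : ∀ J : Fin n → Fin d,
          cuntzWord ψ (Fin.cons a J) * star (cuntzWord ψ (Fin.cons a J)) =
          ψ a * (cuntzWord ψ J * star (cuntzWord ψ J)) * star (ψ a) := by
        intro J
        rw [cuntzWord_cons, star_mul]
        simp only [mul_assoc]
      simp only [this, ← Finset.sum_mul, ← Finset.mul_sum, ih, mul_one]
    simp only [this, hψ.2]

lemma cuntzPermOp_mul_word {n : ℕ} (p : Equiv.Perm (Fin n)) (J : Fin n → Fin d) :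
    cuntzPermOp ψ p * cuntzWord ψ J = cuntzWord ψ (J ∘ p) := by
  rw [cuntzPermOp, Finset.sum_mul]
  have : ∀ l : Fin n → Fin d,
      cuntzWord ψ (l ∘ p) * star (cuntzWord ψ l) * cuntzWord ψ J =
      if l = J then cuntzWord ψ (J ∘ p) else 0 := by
    intro l
    rw [mul_assoc, cuntzWord_orth ψ hψ]
    by_cases h : l = J <;> simp [h]
  simp only [this]
  simp

lemma star_cuntzPermOp_mul_self {n : ℕ} (p : Equiv.Perm (Fin n)) :
    star (cuntzPermOp ψ p) * cuntzPermOp ψ p = 1 := by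
  rw [cuntzPermOp, star_sum, Finset.sum_mul]
  have : ∀ l : Fin n → Fin d,
      star (cuntzWord ψ (l ∘ p) * star (cuntzWord ψ l)) *
        (∑ m : Fin n → Fin d, cuntzWord ψ (m ∘ p) * star (cuntzWord ψ m)) =
      cuntzWord ψ l * star (cuntzWord ψ l) := by
    intro l
    rw [Finset.mul_sum]
    have h1 : ∀ m : Fin n → Fin d,
        star (cuntzWord ψ (l ∘ p) * star (cuntzWord ψ l)) *
          (cuntzWord ψ (m ∘ p) * star (cuntzWord ψ m)) =
        if l = m then cuntzWord ψ l * star (cuntzWord ψ m) else 0 := by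
      intro m
      rw [star_mul, star_star]
      have : cuntzWord ψ l * star (cuntzWord ψ (l ∘ p)) *
          (cuntzWord ψ (m ∘ p) * star (cuntzWord ψ m)) =
          cuntzWord ψ l * ((star (cuntzWord ψ (l ∘ p)) * cuntzWord ψ (m ∘ p)) *
            star (cuntzWord ψ m)) := by simp only [mul_assoc]
      rw [this, cuntzWord_orth ψ hψ]
      have hiff : l ∘ p = m ∘ p ↔ l = m := by
        constructor
        · intro h
          funext k
          have := congrFun h (p.symm k)
          simpa using this
        · rintro rfl; rfl
      by_cases h : l = m
      · simp [h]
      · rw [if_neg (by simpa [hiff] using h)]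
        simp [h]
    simp only [h1]
    simp
  simp only [this]
  exact cuntzWord_complete ψ hψ n

lemma cuntzEndo_mul (a b : B) :
    cuntzEndo ψ (a * b) = cuntzEndo ψ a * cuntzEndo ψ b := by
  rw [cuntzEndo, cuntzEndo, cuntzEndo, Finset.sum_mul_sum]
  apply Finset.sum_congr rfl
  intro i _
  have h1 : ∀ j : Fin d, ψ i * a * star (ψ i) * (ψ j * b * star (ψ j)) =
      if i = j then ψ i * (a * b) * star (ψ i) else 0 := by
    intro j
    have : ψ i * a * star (ψ i) * (ψ j * b * star (ψ j)) =
        ψ i * (a * ((star (ψ i) * ψ j) * (b * star (ψ j)))) := by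
      simp only [mul_assoc]
    rw [this, hψ.1]
    by_cases h : i = j
    · subst h; simp [mul_assoc]
    · simp [h]
  simp only [h1]
  simp

omit hψ in
lemma cuntzEndo_star (b : B) : cuntzEndo ψ (star b) = star (cuntzEndo ψ b) := by
  rw [cuntzEndo, cuntzEndo, star_sum]
  apply Finset.sum_congr rfl
  intro i _
  simp [mul_assoc]

lemma cuntzEndo_word {n : ℕ} (c : Equiv.Perm (Fin (n + 1)))
    (hc0 : c 0 = Fin.last n) (hc : ∀ i : Fin n, c i.succ = i.castSucc)
    (J : Fin n → Fin d) :
    cuntzEndo ψ (cuntzWord ψ J) = cuntzPermOp ψ c * cuntzWord ψ J := by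
  symm
  have hcomp : ∀ i : Fin d, (Fin.snoc J i : Fin (n+1) → Fin d) ∘ c = Fin.cons i J := by
    intro i
    funext k
    refine Fin.cases ?_ ?_ k
    · simp [Function.comp, hc0]
    · intro j
      simp [Function.comp, hc j]
  calc cuntzPermOp ψ c * cuntzWord ψ J
      = ∑ i, cuntzPermOp ψ c * cuntzWord ψ J * (ψ i * star (ψ i)) := by
        rw [← Finset.mul_sum, hψ.2, mul_one]
    _ = ∑ i, ψ i * cuntzWord ψ J * star (ψ i) := by
        apply Finset.sum_congr rfl
        intro i _
        have h2 : cuntzPermOp ψ c * cuntzWord ψ J * (ψ i * star (ψ i)) =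
            cuntzPermOp ψ c * cuntzWord ψ (Fin.snoc J i) * star (ψ i) := by
          rw [cuntzWord_snoc]
          simp only [mul_assoc]
        rw [h2, cuntzPermOp_mul_word ψ hψ, hcomp, cuntzWord_cons]
    _ = cuntzEndo ψ (cuntzWord ψ J) := rfl

end Aux

/-- **Matrix coefficients of symmetry intertwiners are fixed points.**
Let `ψ₁, …, ψ_d` be a Cuntz family of order `d` in a unital C*-algebra `B` with
canonical endomorphism `σ`, and `r, s ≥ 0`.  For `n ≥ 0`, let `c_n` be the
cyclic permutation of `{1, …, n+1}` sending the first letter to the last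
position (in zero-based indexing: `c_n 0 = n` and `c_n (i+1) = i`).  Suppose
`t ∈ B` satisfies `σ(t) = θ(c_s) t θ(c_r)*`.  Then for all multi-indices
`L ∈ {1, …, d}^s` and `M ∈ {1, …, d}^r`, the element `t_{LM} := ψ_L* t ψ_M` is
a fixed point of `σ`. -/
theorem symmetry_intertwiner_coefficients_fixed {B : Type*} [CStarAlgebra B]
    {d : ℕ} (ψ : Fin d → B) (hψ : IsCuntzFamily ψ)
    {r s : ℕ}
    (cr : Equiv.Perm (Fin (r + 1)))
    (hcr0 : cr 0 = Fin.last r) (hcr : ∀ i : Fin r, cr i.succ = i.castSucc)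
    (cs : Equiv.Perm (Fin (s + 1)))
    (hcs0 : cs 0 = Fin.last s) (hcs : ∀ i : Fin s, cs i.succ = i.castSucc)
    (t : B)
    (ht : cuntzEndo ψ t = cuntzPermOp ψ cs * t * star (cuntzPermOp ψ cr))
    (L : Fin s → Fin d) (M : Fin r → Fin d) :
    cuntzEndo ψ (star (cuntzWord ψ L) * t * cuntzWord ψ M) =
      star (cuntzWord ψ L) * t * cuntzWord ψ M := by
  rw [cuntzEndo_mul ψ hψ, cuntzEndo_mul ψ hψ, cuntzEndo_star ψ,
    cuntzEndo_word ψ hψ cs hcs0 hcs, cuntzEndo_word ψ hψ cr hcr0 hcr, ht]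
  rw [star_mul]
  calc star (cuntzWord ψ L) * star (cuntzPermOp ψ cs) *
        (cuntzPermOp ψ cs * t * star (cuntzPermOp ψ cr)) *
        (cuntzPermOp ψ cr * cuntzWord ψ M)
      = star (cuntzWord ψ L) *
        (star (cuntzPermOp ψ cs) * cuntzPermOp ψ cs) * t *
        (star (cuntzPermOp ψ cr) * cuntzPermOp ψ cr) * cuntzWord ψ M := by
        simp only [mul_assoc]
    _ = star (cuntzWord ψ L) * t * cuntzWord ψ M := by
        rw [star_cuntzPermOp_mul_self ψ hψ, star_cuntzPermOp_mul_self ψ hψ]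
        simp [mul_assoc]
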